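/- arXiv:1703.06815 — 2 statements merged into one kernel-verified Lean document; each statement's English description precedes it below -/
import Mathlib

section
/- Let D be a domain description over a finite instant set and M_D its model. Then Σ_{W ∈ W} M_D(W) = 1; consequently the set of well-behaved worlds w.r.t. D is nonempty. -/
open scoped Classical
set_option linter.unusedSectionVars false

section Markov
variable {S X : Type} [DecidableEq X] [Inhabited X]

def PECstN (step : S → X → S) (s : S) (f : ℕ → X) : ℕ → S
  | 0 => s
  | (i+1) => step (PECstN step s f i) (f i)

def PECext {m : ℕ} (F : Fin m → X) : ℕ → X := fun i => if h : i < m then F ⟨i, h⟩ else default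

lemma PECext_cons_zero {m : ℕ} (x : X) (G : Fin m → X) :
    PECext (Fin.cons x G : Fin (m+1) → X) 0 = x := by
  simp [PECext]

lemma PECext_cons_succ {m : ℕ} (x : X) (G : Fin m → X) (j : ℕ) :
    PECext (Fin.cons x G : Fin (m+1) → X) (j+1) = PECext G j := by
  unfold PECext
  by_cases h : j < m
  · rw [dif_pos (by omega : j+1 < m+1), dif_pos h]
    exact @Fin.cons_succ m (fun _ => X) x G ⟨j, h⟩
  · rw [dif_neg (by omega), dif_neg h]

lemma PECstN_shift (step : S → X → S) (s : S) {m : ℕ} (x : X) (G : Fin m → X) :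
    ∀ j, PECstN step s (PECext (Fin.cons x G : Fin (m+1) → X)) (j+1)
      = PECstN step (step s x) (PECext G) j := by
  intro j
  induction j with
  | zero => simp [PECstN, PECext_cons_zero]
  | succ j ih =>
    show step (PECstN step s (PECext (Fin.cons x G)) (j+1)) (PECext (Fin.cons x G) (j+1))
      = step (PECstN step (step s x) (PECext G) j) (PECext G j)
    rw [ih, PECext_cons_succ]

lemma PECext_eq {m : ℕ} (F : Fin m → X) (i : Fin m) : PECext F i = F i := by
  simp [PECext, i.isLt, Fin.eta]

lemma PECmarkov (p : X → ℝ) (step : S → X → S) (univX : Finset X) :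
    ∀ (m : ℕ) (allowed : ℕ → S → X → Prop) (s : S),
    (∀ k s, ∑ x ∈ univX.filter (fun x => allowed k s x), p x = 1) →
    ∑ F ∈ Fintype.piFinset (fun _ : Fin m => univX),
      (if ∀ i : Fin m, allowed i (PECstN step s (PECext F) i) (F i) then ∏ i, p (F i) else 0)
      = 1 := by
  intro m
  induction m with
  | zero =>
    intro allowed s h
    have h1 : ∀ F ∈ Fintype.piFinset (fun _ : Fin 0 => univX),
        (if ∀ i : Fin 0, allowed i (PECstN step s (PECext F) i) (F i) then ∏ i, p (F i) else 0) = 1 := by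
      intro F _; simp
    rw [Finset.sum_congr rfl h1, Finset.sum_const, Fintype.card_piFinset]
    simp
  | succ m ih =>
    intro allowed s h
    have key : ∑ F ∈ Fintype.piFinset (fun _ : Fin (m+1) => univX),
        (if ∀ i : Fin (m+1), allowed i (PECstN step s (PECext F) i) (F i) then ∏ i, p (F i) else 0)
      = ∑ z ∈ univX ×ˢ Fintype.piFinset (fun _ : Fin m => univX),
        (if ∀ i : Fin (m+1), allowed i (PECstN step s (PECext (Fin.cons z.1 z.2)) i) ((Fin.cons z.1 z.2 : Fin (m+1) → X) i)
          then ∏ i, p ((Fin.cons z.1 z.2 : Fin (m+1) → X) i) else 0) := by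
      apply Finset.sum_nbij' (fun F => (F 0, Fin.tail F)) (fun z => Fin.cons z.1 z.2)
      · intro F hF
        simp only [Fintype.mem_piFinset] at hF
        simp [Finset.mem_product, Fintype.mem_piFinset, Fin.tail, hF]
      · intro z hz
        simp only [Finset.mem_product, Fintype.mem_piFinset] at hz
        simp only [Fintype.mem_piFinset]
        intro i
        refine Fin.cases ?_ ?_ i
        · simpa using hz.1
        · intro j; simpa using hz.2 j
      · intro F _; exact Fin.cons_self_tail F
      · intro z _; simp
      · intro F _
        rw [Fin.cons_self_tail F]
    rw [key, Finset.sum_product]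
    have step2 : ∀ x ∈ univX, ∀ G ∈ Fintype.piFinset (fun _ : Fin m => univX),
        (if ∀ i : Fin (m+1), allowed i (PECstN step s (PECext (Fin.cons x G)) i) ((Fin.cons x G : Fin (m+1) → X) i)
          then ∏ i, p ((Fin.cons x G : Fin (m+1) → X) i) else 0)
        = (if allowed 0 s x then p x else 0) *
          (if ∀ i : Fin m, allowed (i+1) (PECstN step (step s x) (PECext G) i) (G i) then ∏ i, p (G i) else 0) := by
      intro x _ G _
      have hcond : (∀ i : Fin (m+1), allowed i (PECstN step s (PECext (Fin.cons x G)) i) ((Fin.cons x G : Fin (m+1) → X) i))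
          ↔ (allowed 0 s x ∧ ∀ i : Fin m, allowed (i+1) (PECstN step (step s x) (PECext G) i) (G i)) := by
        rw [Fin.forall_fin_succ]
        constructor
        · rintro ⟨h0, hs⟩
          refine ⟨by simpa [PECstN] using h0, fun i => ?_⟩
          have := hs i
          rwa [Fin.cons_succ, Fin.val_succ, PECstN_shift] at this
        · rintro ⟨h0, hs⟩
          refine ⟨by simpa [PECstN] using h0, fun i => ?_⟩
          rw [Fin.cons_succ, Fin.val_succ, PECstN_shift]
          exact hs i
      have hprod : (∏ i, p ((Fin.cons x G : Fin (m+1) → X) i)) = p x * ∏ i, p (G i) := by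
        have : (fun i => p ((Fin.cons x G : Fin (m+1) → X) i)) = fun i => (Fin.cons (p x) (p ∘ G) : Fin (m+1) → ℝ) i := by
          funext i
          exact congrFun (Fin.comp_cons p x G) i
        rw [this, Fin.prod_cons]
        rfl
      simp only [hcond, hprod]
      by_cases h0 : allowed 0 s x <;>
        by_cases h1 : (∀ i : Fin m, allowed (i+1) (PECstN step (step s x) (PECext G) i) (G i)) <;>
        simp [h0, h1]
    rw [Finset.sum_congr rfl (fun x hx => Finset.sum_congr rfl (fun G hG => step2 x hx G hG))]
    have ihx : ∀ x, ∑ G ∈ Fintype.piFinset (fun _ : Fin m => univX),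
        (if ∀ i : Fin m, allowed (i+1) (PECstN step (step s x) (PECext G) i) (G i) then ∏ i, p (G i) else 0) = 1 :=
      fun x => ih (fun k => allowed (k+1)) (step s x) (fun k s' => h (k+1) s')
    calc ∑ x ∈ univX, ∑ G ∈ Fintype.piFinset (fun _ : Fin m => univX),
          ((if allowed 0 s x then p x else 0) *
          (if ∀ i : Fin m, allowed (i+1) (PECstN step (step s x) (PECext G) i) (G i) then ∏ i, p (G i) else 0))
        = ∑ x ∈ univX, (if allowed 0 s x then p x else 0) := by
          apply Finset.sum_congr rfl
          intro x _
          rw [← Finset.mul_sum, ihx x, mul_one]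
      _ = 1 := by rw [← Finset.sum_filter, h 0 s]
end Markov


lemma PECindicator_forall {ι : Type*} [Fintype ι] (P : ι → Prop) :
    (if (∀ z, P z) then (1:ℝ) else 0) = ∏ z : ι, (if P z then (1:ℝ) else (0:ℝ)) := by
  by_cases h : ∀ z, P z
  · simp [h]
  · rw [if_neg h]
    push_neg at h
    obtain ⟨z, hz⟩ := h
    exact (Finset.prod_eq_zero (Finset.mem_univ z) (if_neg hz : (if P z then (1:ℝ) else (0:ℝ)) = 0)).symm

lemma PEClemB {A : Type} [Fintype A] [DecidableEq A] {n : ℕ} (pp : Finset (A × Fin (n+1) × ℝ))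
    (hp_unique : ∀ a i (p p' : ℝ), (a,i,p) ∈ pp → (a,i,p') ∈ pp → p = p') :
    ∑ τ : Fin (n+1) → A → Bool,
      (if ((∀ a i, τ i a = true → ∃ p : ℝ, (a,i,p) ∈ pp) ∧ ∀ a i, (a,i,(1:ℝ)) ∈ pp → τ i a = true)
        then ∏ q ∈ pp, (if τ q.2.1 q.1 = true then q.2.2 else 1 - q.2.2) else 0) = 1 := by
  set φ : (Fin (n+1) × A) → Bool → ℝ := fun z b =>
    (if ((b = true → ∃ p : ℝ, (z.2, z.1, p) ∈ pp) ∧ ((z.2, z.1, (1:ℝ)) ∈ pp → b = true)) then 1 else 0)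
    * ∏ q ∈ pp.filter (fun q => (q.2.1, q.1) = z), (if b = true then q.2.2 else 1 - q.2.2) with hφ
  have step1 : ∀ τ : Fin (n+1) → A → Bool,
      (if ((∀ a i, τ i a = true → ∃ p : ℝ, (a,i,p) ∈ pp) ∧ ∀ a i, (a,i,(1:ℝ)) ∈ pp → τ i a = true)
        then ∏ q ∈ pp, (if τ q.2.1 q.1 = true then q.2.2 else 1 - q.2.2) else 0)
      = ∏ z : Fin (n+1) × A, φ z (τ z.1 z.2) := by
    intro τ
    have hiff : ((∀ a i, τ i a = true → ∃ p : ℝ, (a,i,p) ∈ pp) ∧ ∀ a i, (a,i,(1:ℝ)) ∈ pp → τ i a = true)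
        ↔ ∀ z : Fin (n+1) × A, ((τ z.1 z.2 = true → ∃ p : ℝ, (z.2, z.1, p) ∈ pp)
            ∧ ((z.2, z.1, (1:ℝ)) ∈ pp → τ z.1 z.2 = true)) := by
      constructor
      · rintro ⟨h1, h2⟩ z; exact ⟨h1 z.2 z.1, h2 z.2 z.1⟩
      · intro h; exact ⟨fun a i => (h (i,a)).1, fun a i => (h (i,a)).2⟩
    have hfibprod : (∏ z : Fin (n+1) × A, ∏ q ∈ pp.filter (fun q => (q.2.1, q.1) = z),
        (if τ z.1 z.2 = true then q.2.2 else 1 - q.2.2))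
        = ∏ q ∈ pp, (if τ q.2.1 q.1 = true then q.2.2 else 1 - q.2.2) := by
      rw [show (∏ z : Fin (n+1) × A, ∏ q ∈ pp.filter (fun q => (q.2.1, q.1) = z),
          (if τ z.1 z.2 = true then q.2.2 else 1 - q.2.2))
          = ∏ z : Fin (n+1) × A, ∏ q ∈ pp.filter (fun q => (q.2.1, q.1) = z),
          (if τ q.2.1 q.1 = true then q.2.2 else 1 - q.2.2) from
        Finset.prod_congr rfl (fun z _ => Finset.prod_congr rfl (fun q hq => by
          rw [Finset.mem_filter] at hq
          have h1 : q.2.1 = z.1 := by rw [← hq.2]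
          have h2 : q.1 = z.2 := by rw [← hq.2]
          rw [h1, h2]))]
      exact Finset.prod_fiberwise_of_maps_to (fun q _ => Finset.mem_univ _) _
    by_cases h : ((∀ a i, τ i a = true → ∃ p : ℝ, (a,i,p) ∈ pp) ∧ ∀ a i, (a,i,(1:ℝ)) ∈ pp → τ i a = true)
    · rw [if_pos h, ← hfibprod]
      apply Finset.prod_congr rfl
      intro z _
      have hC := hiff.1 h z
      simp only [hφ]
      rw [if_pos hC, one_mul]
    · rw [if_neg h]
      have : ∃ z : Fin (n+1) × A, ¬ ((τ z.1 z.2 = true → ∃ p : ℝ, (z.2, z.1, p) ∈ pp)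
          ∧ ((z.2, z.1, (1:ℝ)) ∈ pp → τ z.1 z.2 = true)) := by
        by_contra hc
        push_neg at hc
        exact h (hiff.2 hc)
      obtain ⟨z, hz⟩ := this
      refine (Finset.prod_eq_zero (Finset.mem_univ z) ?_).symm
      simp only [hφ]
      rw [if_neg hz, zero_mul]
  rw [Finset.sum_congr rfl (fun τ _ => step1 τ)]
  rw [← Equiv.sum_comp (Equiv.curry (Fin (n+1)) A Bool) (fun τ => ∏ z : Fin (n+1) × A, φ z (τ z.1 z.2))]
  have : ∀ x : Fin (n+1) × A → Bool, (∏ z : Fin (n+1) × A, φ z ((Equiv.curry (Fin (n+1)) A Bool x) z.1 z.2)) = ∏ z, φ z (x z) := by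
    intro x; apply Finset.prod_congr rfl; intro z _; rfl
  rw [Finset.sum_congr rfl (fun x _ => this x)]
  have key : ∀ z : Fin (n+1) × A, ∑ b ∈ (Finset.univ : Finset Bool), φ z b = 1 := by
    intro z
    rw [Fintype.sum_bool]
    by_cases hz : ∃ p : ℝ, (z.2, z.1, p) ∈ pp
    · obtain ⟨p, hp⟩ := hz
      have hfib : pp.filter (fun q => (q.2.1, q.1) = z) = {(z.2, z.1, p)} := by
        ext q
        simp only [Finset.mem_filter, Finset.mem_singleton]
        constructor
        · rintro ⟨hq, he⟩
          have h1 : q.2.1 = z.1 := by rw [← he]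
          have h2 : q.1 = z.2 := by rw [← he]
          have hq' : (z.2, z.1, q.2.2) ∈ pp := by
            rw [← h1, ← h2]; exact hq
          have := hp_unique z.2 z.1 q.2.2 p hq' hp
          calc q = (q.1, q.2.1, q.2.2) := rfl
            _ = (z.2, z.1, p) := by rw [h1, h2, this]
        · rintro rfl; exact ⟨hp, rfl⟩
      have htrue : φ z true = p := by
        simp only [hφ, hfib, Finset.prod_singleton]
        rw [if_pos ⟨fun _ => ⟨p, hp⟩, fun _ => by trivial⟩]
        simp
      by_cases h1 : (z.2, z.1, (1:ℝ)) ∈ pp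
      · have hp1 : p = 1 := hp_unique z.2 z.1 p 1 hp h1
        have hfalse : φ z false = 0 := by
          simp only [hφ]
          rw [if_neg (by simp [h1])]
          ring
        rw [htrue, hfalse, hp1]; ring
      · have hfalse : φ z false = 1 - p := by
          simp only [hφ, hfib, Finset.prod_singleton]
          rw [if_pos ⟨by simp, fun h => absurd h h1⟩]
          simp
        rw [htrue, hfalse]; ring
    · have hfib : pp.filter (fun q => (q.2.1, q.1) = z) = ∅ := by
        ext q
        simp only [Finset.mem_filter, Finset.notMem_empty, iff_false, not_and]
        intro hq he
        apply hz
        refine ⟨q.2.2, ?_⟩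
        have h1 : q.2.1 = z.1 := by rw [← he]
        have h2 : q.1 = z.2 := by rw [← he]
        rw [← h1, ← h2]; exact hq
      have htrue : φ z true = 0 := by
        simp only [hφ]
        rw [if_neg (by rintro ⟨h, -⟩; exact hz (h (by trivial)))]
        ring
      have hfalse : φ z false = 1 := by
        simp only [hφ, hfib]
        rw [if_pos ⟨by simp, fun h => absurd h (fun hh => hz ⟨1, h⟩)⟩]

        simp
      rw [htrue, hfalse]; ring
  calc ∑ x : Fin (n+1) × A → Bool, ∏ z, φ z (x z)
      = ∑ x ∈ Fintype.piFinset (fun _ : Fin (n+1) × A => (Finset.univ : Finset Bool)), ∏ z, φ z (x z) := by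
        rw [Fintype.piFinset_univ]
    _ = ∏ z : Fin (n+1) × A, ∑ b ∈ (Finset.univ : Finset Bool), φ z b := (Finset.prod_univ_sum _ _).symm
    _ = 1 := by rw [Finset.prod_congr rfl (fun z _ => key z)]; simp


/-- A PEC domain description over fluents `F`, actions `A`, values `V` and
instants `Fin (n+1)`: an i-proposition (a set of initial outcomes, i.e. full
fluent states with probabilities), a list of c-propositions (a body, i.e. a
condition on states, together with a head of outcomes, i.e. partial fluent
states with probabilities), and p-propositions (action, instant, probability). -/
structure PECDomain (F A V : Type) (n : ℕ) where
  init : Finset ((F → V) × ℝ)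
  cprops : List ((((F → V) × (A → Bool)) → Prop) × Finset ((F → Option V) × ℝ))
  pprops : Finset (A × Fin (n + 1) × ℝ)

/-- A world: a function from instants to states (fluent valuation + action valuation). -/
abbrev PECWorld (F A V : Type) (n : ℕ) := Fin (n + 1) → (F → V) × (A → Bool)

/-- Fluent state update by a partial fluent state. -/
def upd {F V : Type} (s : F → V) (x : F → Option V) : F → V := fun f => (x f).getD (s f)

variable {F A V : Type} {n : ℕ}

/-- The c-proposition `c` is activated at instant `i` in world `w`. -/
def activated (D : PECDomain F A V n) (w : PECWorld F A V n) (i : Fin (n + 1))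
    (c : (((F → V) × (A → Bool)) → Prop) × Finset ((F → Option V) × ℝ)) : Prop :=
  c ∈ D.cprops ∧ c.1 (w i)

/-- Closed world assumption for actions: an action holds only if some p-proposition
licenses it, and actions with probability 1 must hold. -/
def cwa (D : PECDomain F A V n) (w : PECWorld F A V n) : Prop :=
  (∀ a i, (w i).2 a = true → ∃ p : ℝ, (a, i, p) ∈ D.pprops) ∧
  ∀ a i, (a, i, (1 : ℝ)) ∈ D.pprops → (w i).2 a = true

/-- A trace of `w`: an initial choice from the i-proposition matching `w` at instant 0,
and an effect choice assigning, to each instant at which a cause occurs, an outcome of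
the activated c-proposition, such that `w` realizes justified change. -/
def IsTrace (D : PECDomain F A V n) (w : PECWorld F A V n)
    (tr : ((F → V) × ℝ) × (Fin (n + 1) → Option ((F → Option V) × ℝ))) : Prop :=
  tr.1 ∈ D.init ∧ (w 0).1 = tr.1.1 ∧
  (∀ i, (tr.2 i).elim (¬ ∃ c, activated D w i c)
      (fun O => ∃ c, activated D w i c ∧ O ∈ c.2)) ∧
  ∀ i : Fin n, (w i.succ).1 =
    (tr.2 i.castSucc).elim (w i.castSucc).1 (fun O => upd (w i.castSucc).1 O.1)

/-- A world is well-behaved iff it satisfies the CWA for actions, the initial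
condition and the justified change condition (i.e. it has a trace). -/
def wellBehaved (D : PECDomain F A V n) (w : PECWorld F A V n) : Prop :=
  cwa D w ∧ ∃ tr, IsTrace D w tr

/-- Evaluation of a trace: the probability of the initial choice times the
probabilities of all chosen outcomes. -/
noncomputable def epsTrace
    (tr : ((F → V) × ℝ) × (Fin (n + 1) → Option ((F → Option V) × ℝ))) : ℝ :=
  tr.1.2 * ∏ i : Fin (n + 1), (tr.2 i).elim 1 Prod.snd

/-- Evaluation of the action narrative of `D` against `w`: multiply `P⁺` for
p-propositions whose action occurs at its instant in `w`, and `1 - P⁺` otherwise. -/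
noncomputable def epsD (D : PECDomain F A V n) (w : PECWorld F A V n) : ℝ :=
  ∏ q ∈ D.pprops, (if (w q.2.1).2 q.1 = true then q.2.2 else 1 - q.2.2)

/-- The model of a domain description: `0` on non-well-behaved worlds, and
`ε_D(W) · Σ_{tr ∈ TR_D^W} ε(tr)` on well-behaved worlds. -/
noncomputable def modelOf (D : PECDomain F A V n) (w : PECWorld F A V n) : ℝ :=
  if wellBehaved D w then epsD D w * ∑ᶠ tr ∈ {tr | IsTrace D w tr}, epsTrace tr else 0

section App
variable {F A V : Type} {n : ℕ} [Fintype F] [Fintype A] [Fintype V]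
  [DecidableEq F] [DecidableEq A] [DecidableEq V]

/-- All outcomes of all c-propositions. -/
noncomputable def PECallOut (D : PECDomain F A V n) : Finset ((F → Option V) × ℝ) :=
  D.cprops.foldr (fun c t => c.2 ∪ t) ∅

lemma PECallOut_sub (D : PECDomain F A V n)
    {c : (((F → V) × (A → Bool)) → Prop) × Finset ((F → Option V) × ℝ)}
    (hc : c ∈ D.cprops) : c.2 ⊆ PECallOut D := by
  unfold PECallOut
  generalize D.cprops = l at hc ⊢
  induction l with
  | nil => simp at hc
  | cons c' l ih =>
    rcases List.mem_cons.1 hc with h | h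
    · subst h; exact Finset.subset_union_left
    · exact (ih h).trans Finset.subset_union_right

/-- The step function of the fluent-state Markov chain. -/
def PECstep : (F → V) → Option ((F → Option V) × ℝ) → (F → V) :=
  fun s x => x.elim s (fun O => upd s O.1)

/-- The probability attached to an effect choice. -/
noncomputable def PECp : Option ((F → Option V) × ℝ) → ℝ := fun x => x.elim 1 Prod.snd

/-- Allowed effect choices at instant `k`, state `s`. -/
def PECallowed (D : PECDomain F A V n) (τ : Fin (n+1) → A → Bool) :
    ℕ → (F → V) → Option ((F → Option V) × ℝ) → Prop := fun k s x =>
  x.elim (¬ ∃ c, c ∈ D.cprops ∧ ∃ h : k < n+1, c.1 (s, τ ⟨k, h⟩))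
    (fun O => ∃ c, (c ∈ D.cprops ∧ ∃ h : k < n+1, c.1 (s, τ ⟨k, h⟩)) ∧ O ∈ c.2)

lemma PECallowed_sum (D : PECDomain F A V n) (τ : Fin (n+1) → A → Bool)
    (hc_sum : ∀ c ∈ D.cprops, ∑ O ∈ c.2, O.2 = 1)
    (hc_excl : ∀ s c c', c ∈ D.cprops → c' ∈ D.cprops → c.1 s → c'.1 s → c = c') :
    ∀ (k : ℕ) (s : F → V),
      ∑ x ∈ (Finset.insertNone (PECallOut D)).filter (fun x => PECallowed D τ k s x), PECp x = 1 := by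
  intro k s
  rw [Finset.sum_filter, Finset.sum_insertNone]
  by_cases hact : ∃ c, c ∈ D.cprops ∧ ∃ h : k < n+1, c.1 (s, τ ⟨k, h⟩)
  · obtain ⟨c, hcmem, hk, hcact⟩ := hact
    have huniq : ∀ c', (c' ∈ D.cprops ∧ ∃ h : k < n+1, c'.1 (s, τ ⟨k, h⟩)) → c' = c := by
      rintro c' ⟨hm, hk', ha⟩
      exact hc_excl (s, τ ⟨k, hk⟩) c' c hm hcmem ha hcact
    have hnone : (if PECallowed D τ k s (none : Option ((F → Option V) × ℝ)) then PECp (none : Option ((F → Option V) × ℝ)) else 0) = 0 := by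
      rw [if_neg]
      simp only [PECallowed, Option.elim, not_not]
      exact ⟨c, hcmem, hk, hcact⟩
    have hsome : ∀ O, (if PECallowed D τ k s (some O) then PECp (some O) else 0)
        = (if O ∈ c.2 then O.2 else 0) := by
      intro O
      have : PECallowed D τ k s (some O) ↔ O ∈ c.2 := by
        simp only [PECallowed, Option.elim]
        constructor
        · rintro ⟨c', hc', hO⟩
          rwa [huniq c' hc'] at hO
        · intro hO; exact ⟨c, ⟨hcmem, hk, hcact⟩, hO⟩
      simp only [this]; rfl
    rw [hnone, zero_add]
    rw [Finset.sum_congr rfl (fun O _ => hsome O), ← Finset.sum_filter]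
    rw [show (PECallOut D).filter (fun O => O ∈ c.2) = c.2 from by
      ext O
      simp only [Finset.mem_filter, and_iff_right_iff_imp]
      exact fun h => PECallOut_sub D hcmem h]
    exact hc_sum c hcmem
  · have hnone : (if PECallowed D τ k s (none : Option ((F → Option V) × ℝ)) then PECp (none : Option ((F → Option V) × ℝ)) else 0) = 1 := by
      have hA : PECallowed D τ k s (none : Option ((F → Option V) × ℝ)) := hact
      rw [if_pos hA]; rfl
    have hsome : ∀ O, (if PECallowed D τ k s (some O) then PECp (some O) else 0) = 0 := by
      intro O
      rw [if_neg]
      rintro ⟨c, hc, -⟩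
      exact hact ⟨c, hc⟩
    rw [hnone, Finset.sum_congr rfl (fun O _ => hsome O)]
    simp

end App
section Bridge
variable {F A V : Type} {n : ℕ} [Fintype F] [Fintype A] [Fintype V]
  [DecidableEq F] [DecidableEq A] [DecidableEq V]

lemma PECbridge (D : PECDomain F A V n) (τ : Fin (n+1) → A → Bool)
    (σ : Fin (n+1) → F → V) (O₀ : (F → V) × ℝ) (hO : O₀ ∈ D.init)
    (f : Fin (n+1) → Option ((F → Option V) × ℝ)) :
    IsTrace D (fun i => (σ i, τ i)) (O₀, f) ↔
      ((σ = fun i : Fin (n+1) => PECstN PECstep O₀.1 (PECext f) ↑i) ∧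
       ∀ i : Fin (n+1), PECallowed D τ ↑i (PECstN PECstep O₀.1 (PECext f) ↑i) (f i)) := by
  have hact : ∀ (i : Fin (n+1)) (s' : F → V) c,
      (c ∈ D.cprops ∧ ∃ h : (i : ℕ) < n+1, c.1 (s', τ ⟨↑i, h⟩)) ↔ (c ∈ D.cprops ∧ c.1 (s', τ i)) := by
    intro i s' c
    constructor
    · rintro ⟨hm, h, ha⟩; exact ⟨hm, by rwa [Fin.eta] at ha⟩
    · rintro ⟨hm, ha⟩; exact ⟨hm, i.isLt, by rwa [Fin.eta]⟩
  have hcond : ∀ (i : Fin (n+1)) (s' : F → V),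
      PECallowed D τ ↑i s' (f i) ↔
        (f i).elim (¬ ∃ c, c ∈ D.cprops ∧ c.1 (s', τ i))
          (fun O => ∃ c, (c ∈ D.cprops ∧ c.1 (s', τ i)) ∧ O ∈ c.2) := by
    intro i s'
    cases hfi : f i with
    | none =>
      simp only [PECallowed, Option.elim]
      constructor
      · intro h hex
        obtain ⟨c, hc⟩ := hex
        exact h ⟨c, (hact i s' c).2 hc⟩
      · intro h hex
        obtain ⟨c, hc⟩ := hex
        exact h ⟨c, (hact i s' c).1 hc⟩
    | some O =>
      simp only [PECallowed, Option.elim]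
      constructor
      · rintro ⟨c, hc, hO'⟩
        exact ⟨c, (hact i s' c).1 hc, hO'⟩
      · rintro ⟨c, hc, hO'⟩
        exact ⟨c, (hact i s' c).2 hc, hO'⟩
  constructor
  · rintro ⟨-, h2, h3, h4⟩
    have h2' : σ 0 = O₀.1 := h2
    have hstate : ∀ j (hj : j < n+1), σ ⟨j, hj⟩ = PECstN PECstep O₀.1 (PECext f) j := by
      intro j
      induction j with
      | zero =>
        intro hj
        have h0 : (⟨0, hj⟩ : Fin (n+1)) = 0 := rfl
        rw [h0]; exact h2'
      | succ j ih =>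
        intro hj
        have hj' : j < n+1 := by omega
        have hjn : j < n := by omega
        have h4j : σ (⟨j, hjn⟩ : Fin n).succ
            = (f (⟨j, hjn⟩ : Fin n).castSucc).elim (σ (⟨j, hjn⟩ : Fin n).castSucc)
              (fun O => upd (σ (⟨j, hjn⟩ : Fin n).castSucc) O.1) := h4 ⟨j, hjn⟩
        have hsc : (⟨j, hjn⟩ : Fin n).succ = (⟨j+1, hj⟩ : Fin (n+1)) := rfl
        have hcs : (⟨j, hjn⟩ : Fin n).castSucc = (⟨j, hj'⟩ : Fin (n+1)) := rfl
        rw [hsc, hcs] at h4j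
        show σ ⟨j+1, hj⟩ = PECstep (PECstN PECstep O₀.1 (PECext f) j) (PECext f j)
        rw [h4j, ih hj']
        have hx : PECext f j = f ⟨j, hj'⟩ := by unfold PECext; rw [dif_pos hj']
        rw [hx]
        rfl
    have hσ : σ = fun i : Fin (n+1) => PECstN PECstep O₀.1 (PECext f) ↑i := by
      funext i
      conv_lhs => rw [← Fin.eta i i.isLt]
      exact hstate ↑i i.isLt
    refine ⟨hσ, fun i => ?_⟩
    have h3i' : (f i).elim (¬ ∃ c, c ∈ D.cprops ∧ c.1 (σ i, τ i))
        (fun O => ∃ c, (c ∈ D.cprops ∧ c.1 (σ i, τ i)) ∧ O ∈ c.2) := h3 i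
    have hres := (hcond i (σ i)).2 h3i'
    rwa [show σ i = PECstN PECstep O₀.1 (PECext f) ↑i from congrFun hσ i] at hres
  · rintro ⟨hσ, hall⟩
    subst hσ
    refine ⟨hO, ?_, ?_, ?_⟩
    · show PECstN PECstep O₀.1 (PECext f) ↑(0 : Fin (n+1)) = O₀.1
      rw [Fin.val_zero]
      rfl
    · intro i
      exact (hcond i (PECstN PECstep O₀.1 (PECext f) ↑i)).1 (hall i)
    · intro i
      show PECstN PECstep O₀.1 (PECext f) ↑(i.succ)
          = (f i.castSucc).elim (PECstN PECstep O₀.1 (PECext f) ↑(i.castSucc))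
            (fun O => upd (PECstN PECstep O₀.1 (PECext f) ↑(i.castSucc)) O.1)
      rw [Fin.val_succ, Fin.coe_castSucc]
      have hx : PECext f ↑i = f i.castSucc := by
        unfold PECext
        rw [dif_pos (show (↑i : ℕ) < n+1 from by omega)]
        congr 1
      calc PECstN PECstep O₀.1 (PECext f) (↑i+1)
          = PECstep (PECstN PECstep O₀.1 (PECext f) ↑i) (PECext f ↑i) := rfl
        _ = (f i.castSucc).elim (PECstN PECstep O₀.1 (PECext f) ↑i)
              (fun O => upd (PECstN PECstep O₀.1 (PECext f) ↑i) O.1) := by rw [hx]; rfl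
end Bridge
section LemA
variable {F A V : Type} {n : ℕ} [Fintype F] [Fintype A] [Fintype V]
  [DecidableEq F] [DecidableEq A] [DecidableEq V]

lemma PEClemA (D : PECDomain F A V n) (τ : Fin (n+1) → A → Bool)
    (hinit_sum : ∑ O ∈ D.init, O.2 = 1)
    (hc_sum : ∀ c ∈ D.cprops, ∑ O ∈ c.2, O.2 = 1)
    (hc_excl : ∀ s c c', c ∈ D.cprops → c' ∈ D.cprops → c.1 s → c'.1 s → c = c') :
    ∑ σ : Fin (n+1) → F → V,
      ∑ tr ∈ (D.init ×ˢ Fintype.piFinset (fun _ : Fin (n+1) => Finset.insertNone (PECallOut D))).filter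
          (fun tr => IsTrace D (fun i => (σ i, τ i)) tr), epsTrace tr = 1 := by
  have hsum := PECallowed_sum D τ hc_sum hc_excl
  have hmain : ∀ O₀ ∈ D.init, ∀ f ∈ Fintype.piFinset (fun _ : Fin (n+1) => Finset.insertNone (PECallOut D)),
      (∑ σ : Fin (n+1) → F → V,
        (if IsTrace D (fun i => (σ i, τ i)) (O₀, f) then epsTrace (O₀, f) else 0))
      = (if (∀ i : Fin (n+1), PECallowed D τ ↑i (PECstN PECstep O₀.1 (PECext f) ↑i) (f i))
          then epsTrace (O₀, f) else 0) := by
    intro O₀ hO f _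
    have hb : ∀ σ : Fin (n+1) → F → V,
        (if IsTrace D (fun i => (σ i, τ i)) (O₀, f) then epsTrace (O₀, f) else 0)
        = (if ((σ = fun i : Fin (n+1) => PECstN PECstep O₀.1 (PECext f) ↑i) ∧
            (∀ i : Fin (n+1), PECallowed D τ ↑i (PECstN PECstep O₀.1 (PECext f) ↑i) (f i)))
            then epsTrace (O₀, f) else 0) := by
      intro σ; exact if_congr (PECbridge D τ σ O₀ hO f) rfl rfl
    rw [Finset.sum_congr rfl (fun σ _ => hb σ)]
    by_cases hC : (∀ i : Fin (n+1), PECallowed D τ ↑i (PECstN PECstep O₀.1 (PECext f) ↑i) (f i))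
    · rw [if_pos hC]
      have hb2 : ∀ σ : Fin (n+1) → F → V,
          (if ((σ = fun i : Fin (n+1) => PECstN PECstep O₀.1 (PECext f) ↑i) ∧
            (∀ i : Fin (n+1), PECallowed D τ ↑i (PECstN PECstep O₀.1 (PECext f) ↑i) (f i)))
            then epsTrace (O₀, f) else 0)
          = (if (σ = fun i : Fin (n+1) => PECstN PECstep O₀.1 (PECext f) ↑i)
              then epsTrace (O₀, f) else 0) := by
        intro σ; exact if_congr (and_iff_left hC) rfl rfl
      rw [Finset.sum_congr rfl (fun σ _ => hb2 σ)]
      rw [Finset.sum_ite_eq' Finset.univ (fun i : Fin (n+1) => PECstN PECstep O₀.1 (PECext f) ↑i)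
        (fun _ => epsTrace (O₀, f))]
      rw [if_pos (Finset.mem_univ _)]
    · rw [if_neg hC]
      rw [Finset.sum_congr rfl (fun σ _ => if_neg (fun h => hC h.2))]
      exact Finset.sum_const_zero
  calc ∑ σ : Fin (n+1) → F → V,
      ∑ tr ∈ (D.init ×ˢ Fintype.piFinset (fun _ : Fin (n+1) => Finset.insertNone (PECallOut D))).filter
          (fun tr => IsTrace D (fun i => (σ i, τ i)) tr), epsTrace tr
      = ∑ σ : Fin (n+1) → F → V, ∑ O₀ ∈ D.init,
          ∑ f ∈ Fintype.piFinset (fun _ : Fin (n+1) => Finset.insertNone (PECallOut D)),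
          (if IsTrace D (fun i => (σ i, τ i)) (O₀, f) then epsTrace (O₀, f) else 0) := by
        apply Finset.sum_congr rfl
        intro σ _
        rw [Finset.sum_filter, Finset.sum_product]
    _ = ∑ O₀ ∈ D.init, ∑ σ : Fin (n+1) → F → V,
          ∑ f ∈ Fintype.piFinset (fun _ : Fin (n+1) => Finset.insertNone (PECallOut D)),
          (if IsTrace D (fun i => (σ i, τ i)) (O₀, f) then epsTrace (O₀, f) else 0) := Finset.sum_comm
    _ = ∑ O₀ ∈ D.init, ∑ f ∈ Fintype.piFinset (fun _ : Fin (n+1) => Finset.insertNone (PECallOut D)),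
          ∑ σ : Fin (n+1) → F → V,
          (if IsTrace D (fun i => (σ i, τ i)) (O₀, f) then epsTrace (O₀, f) else 0) := by
        exact Finset.sum_congr rfl (fun O₀ _ => Finset.sum_comm)
    _ = ∑ O₀ ∈ D.init, ∑ f ∈ Fintype.piFinset (fun _ : Fin (n+1) => Finset.insertNone (PECallOut D)),
          (if (∀ i : Fin (n+1), PECallowed D τ ↑i (PECstN PECstep O₀.1 (PECext f) ↑i) (f i))
            then epsTrace (O₀, f) else 0) := by
        exact Finset.sum_congr rfl (fun O₀ hO => Finset.sum_congr rfl (fun f hf => hmain O₀ hO f hf))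
    _ = ∑ O₀ ∈ D.init, O₀.2 *
          ∑ f ∈ Fintype.piFinset (fun _ : Fin (n+1) => Finset.insertNone (PECallOut D)),
          (if (∀ i : Fin (n+1), PECallowed D τ ↑i (PECstN PECstep O₀.1 (PECext f) ↑i) (f i))
            then ∏ i : Fin (n+1), PECp (f i) else 0) := by
        apply Finset.sum_congr rfl
        intro O₀ _
        rw [Finset.mul_sum]
        apply Finset.sum_congr rfl
        intro f _
        by_cases hC : (∀ i : Fin (n+1), PECallowed D τ ↑i (PECstN PECstep O₀.1 (PECext f) ↑i) (f i))
        · rw [if_pos hC, if_pos hC]; rfl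
        · rw [if_neg hC, if_neg hC, mul_zero]
    _ = ∑ O₀ ∈ D.init, O₀.2 * 1 := by
        apply Finset.sum_congr rfl
        intro O₀ _
        rw [PECmarkov PECp PECstep (Finset.insertNone (PECallOut D)) (n+1) (PECallowed D τ) O₀.1 hsum]
    _ = 1 := by
        simp only [mul_one]
        exact hinit_sum
end LemA

/-- Splitting a world into its action part and fluent part. -/
def PECworldEquiv (F A V : Type) (n : ℕ) :
    ((Fin (n+1) → A → Bool) × (Fin (n+1) → F → V)) ≃ PECWorld F A V n :=
  ⟨fun z i => (z.2 i, z.1 i), fun w => (fun i => (w i).2, fun i => (w i).1),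
    fun z => rfl, fun w => rfl⟩
/-- The sum of the model over all worlds is 1; consequently there is a
well-behaved world. -/
theorem stmt16 [Fintype F] [Fintype A] [Fintype V]
    [DecidableEq F] [DecidableEq A] [DecidableEq V]
    (D : PECDomain F A V n)
    (hinit_sum : ∑ O ∈ D.init, O.2 = 1)
    (hinit_prob : ∀ O ∈ D.init, O.2 ∈ Set.Ioc (0 : ℝ) 1)
    (hinit_inj : Set.InjOn Prod.fst (D.init : Set ((F → V) × ℝ)))
    (hc_sum : ∀ c ∈ D.cprops, ∑ O ∈ c.2, O.2 = 1)
    (hc_prob : ∀ c ∈ D.cprops, ∀ O ∈ c.2, O.2 ∈ Set.Ioc (0 : ℝ) 1)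
    (hc_inj : ∀ c ∈ D.cprops, Set.InjOn Prod.fst (c.2 : Set ((F → Option V) × ℝ)))
    (hc_excl : ∀ s c c', c ∈ D.cprops → c' ∈ D.cprops → c.1 s → c'.1 s → c = c')
    (hp_prob : ∀ q ∈ D.pprops, q.2.2 ∈ Set.Ioc (0 : ℝ) 1)
    (hp_unique : ∀ a i (p p' : ℝ), (a, i, p) ∈ D.pprops → (a, i, p') ∈ D.pprops → p = p') :
    (∑ w : PECWorld F A V n, modelOf D w) = 1 ∧ ∃ w, wellBehaved D w := by
  have hsum1 : (∑ w : PECWorld F A V n, modelOf D w) = 1 := by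
    -- rewrite the finsum in modelOf as a Finset sum
    have hset : ∀ w : PECWorld F A V n, {tr | IsTrace D w tr}
        = ↑((D.init ×ˢ Fintype.piFinset (fun _ : Fin (n+1) => Finset.insertNone (PECallOut D))).filter
            (fun tr => IsTrace D w tr)) := by
      intro w
      ext tr
      simp only [Set.mem_setOf_eq, Finset.coe_filter, Finset.mem_product, Set.mem_setOf_eq,
        Fintype.mem_piFinset]
      constructor
      · intro h
        refine ⟨⟨h.1, fun i => ?_⟩, h⟩
        rw [Finset.mem_insertNone]
        intro O hO
        cases hfi : tr.2 i with
        | none => rw [hfi] at hO; simp at hO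
        | some O' =>
          rw [hfi] at hO
          have h3 := h.2.2.1 i
          rw [hfi] at h3
          obtain ⟨c, hc, hOc⟩ := h3
          have hOO : O' = O := by simpa using hO
          rw [← hOO]
          exact PECallOut_sub D hc.1 hOc
      · exact fun h => h.2
    have hm : ∀ w : PECWorld F A V n, modelOf D w
        = if cwa D w then epsD D w *
            ∑ tr ∈ (D.init ×ˢ Fintype.piFinset (fun _ : Fin (n+1) => Finset.insertNone (PECallOut D))).filter
              (fun tr => IsTrace D w tr), epsTrace tr
          else 0 := by
      intro w
      unfold modelOf
      rw [show (∑ᶠ tr ∈ {tr | IsTrace D w tr}, epsTrace tr)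
          = ∑ tr ∈ (D.init ×ˢ Fintype.piFinset (fun _ : Fin (n+1) => Finset.insertNone (PECallOut D))).filter
              (fun tr => IsTrace D w tr), epsTrace tr from by
        rw [hset w]; exact finsum_mem_coe_finset _ _]
      by_cases hwb : wellBehaved D w
      · rw [if_pos hwb, if_pos hwb.1]
      · rw [if_neg hwb]
        by_cases hcwa : cwa D w
        · rw [if_pos hcwa]
          have hempty : (D.init ×ˢ Fintype.piFinset (fun _ : Fin (n+1) => Finset.insertNone (PECallOut D))).filter
              (fun tr => IsTrace D w tr) = ∅ := by
            rw [Finset.filter_eq_empty_iff]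
            intro tr _ htr
            exact hwb ⟨hcwa, tr, htr⟩
          rw [hempty, Finset.sum_empty, mul_zero]
        · rw [if_neg hcwa]
    -- split the world into action part and fluent part
    rw [← Equiv.sum_comp (PECworldEquiv F A V n) (modelOf D), Fintype.sum_prod_type]
    have hτ : ∀ τ : Fin (n+1) → A → Bool,
        (∑ σ : Fin (n+1) → F → V, modelOf D (PECworldEquiv F A V n (τ, σ)))
        = (if ((∀ a i, τ i a = true → ∃ p : ℝ, (a,i,p) ∈ D.pprops) ∧
              ∀ a i, (a,i,(1:ℝ)) ∈ D.pprops → τ i a = true)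
            then ∏ q ∈ D.pprops, (if τ q.2.1 q.1 = true then q.2.2 else 1 - q.2.2) else 0) := by
      intro τ
      have h1 : ∀ σ : Fin (n+1) → F → V, modelOf D (PECworldEquiv F A V n (τ, σ))
          = (if ((∀ a i, τ i a = true → ∃ p : ℝ, (a,i,p) ∈ D.pprops) ∧
                ∀ a i, (a,i,(1:ℝ)) ∈ D.pprops → τ i a = true)
              then (∏ q ∈ D.pprops, (if τ q.2.1 q.1 = true then q.2.2 else 1 - q.2.2)) *
                ∑ tr ∈ (D.init ×ˢ Fintype.piFinset (fun _ : Fin (n+1) => Finset.insertNone (PECallOut D))).filter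
                  (fun tr => IsTrace D (fun i => (σ i, τ i)) tr), epsTrace tr
              else 0) := by
        intro σ
        rw [hm (PECworldEquiv F A V n (τ, σ))]
        exact if_congr Iff.rfl (by rfl) rfl
      rw [Finset.sum_congr rfl (fun σ _ => h1 σ)]
      by_cases hC : ((∀ a i, τ i a = true → ∃ p : ℝ, (a,i,p) ∈ D.pprops) ∧
          ∀ a i, (a,i,(1:ℝ)) ∈ D.pprops → τ i a = true)
      · rw [Finset.sum_congr rfl (fun σ _ => if_pos hC), if_pos hC, ← Finset.mul_sum,
          PEClemA D τ hinit_sum hc_sum hc_excl, mul_one]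
      · rw [Finset.sum_congr rfl (fun σ _ => if_neg hC), if_neg hC, Finset.sum_const_zero]
    rw [Finset.sum_congr rfl (fun τ _ => hτ τ)]
    exact PEClemB D.pprops hp_unique
  refine ⟨hsum1, ?_⟩
  by_contra hno
  push_neg at hno
  have : (∑ w : PECWorld F A V n, modelOf D w) = 0 := by
    apply Finset.sum_eq_zero
    intro w _
    unfold modelOf
    rw [if_neg (hno w)]
  rw [hsum1] at this
  exact one_ne_zero this
end

section
/- In the Keys domain D_K (initially no keys, not locked out, inside; PickupKeys performed at 7:30 with probability 0.99 causing HasKeys deterministically; GoOut performed at 7:40 with probability 1, causing LockedOut and going Outside when inside without keys, and just going Outside when inside with keys), there are exactly two well-behaved worlds, with model values 0.99 and 0.01, and the model assigns probability 0.01 to LockedOut at any instant after 7:40 and probability 0.99 to HasKeys at any instant after 7:30. -/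
open scoped Classical

variable {F A V : Type} {n : ℕ}

/-- The Keys domain `D_K`. Fluents `Fin 3`: `0` = HasKeys, `1` = LockedOut,
`2` = Location (`true` = Inside, `false` = Outside). Actions `Bool`:
`true` = PickupKeys, `false` = GoOut. Instants `Fin 4`: `0` = 7:30, `1` = 7:40,
`2, 3` = later instants. Initially no keys, not locked out, inside; PickupKeys is
performed at 7:30 with probability 0.99 (causing HasKeys when inside); GoOut is
performed at 7:40 with probability 1, causing LockedOut and Outside when inside
without keys, and just Outside when inside with keys. -/
noncomputable def keysDomain : PECDomain (Fin 3) Bool Bool 3 where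
  init := {(fun f => if f = 2 then true else false, 1)}
  cprops := [
    ⟨fun s => s.2 false = true ∧ s.1 0 = false ∧ s.1 2 = true,
      {(fun f => if f = 1 then some true else if f = 2 then some false else none, 1)}⟩,
    ⟨fun s => s.2 false = true ∧ s.1 0 = true ∧ s.1 2 = true,
      {(fun f => if f = 2 then some false else none, 1)}⟩,
    ⟨fun s => s.2 true = true ∧ s.1 2 = true,
      {(fun f => if f = 0 then some true else none, 1)}⟩]
  pprops := {(true, (0 : Fin 4), (0.99 : ℝ)), (false, (1 : Fin 4), (1 : ℝ))}

/-! ### Auxiliary material for `stmt18` -/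

namespace Stmt18Aux

/-- outcome of the first c-proposition -/
def O1 : Fin 3 → Option Bool := fun f => if f = 1 then some true else if f = 2 then some false else none
/-- outcome of the second c-proposition -/
def O2 : Fin 3 → Option Bool := fun f => if f = 2 then some false else none
/-- outcome of the third c-proposition -/
def O3 : Fin 3 → Option Bool := fun f => if f = 0 then some true else none

/-- initial fluent state -/
def s0 : Fin 3 → Bool := fun f => if f = 2 then true else false

abbrev CProp := (((Fin 3 → Bool) × (Bool → Bool)) → Prop) × Finset ((Fin 3 → Option Bool) × ℝ)

noncomputable def C1 : CProp :=
  ⟨fun s => s.2 false = true ∧ s.1 0 = false ∧ s.1 2 = true, {(O1, 1)}⟩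
noncomputable def C2 : CProp :=
  ⟨fun s => s.2 false = true ∧ s.1 0 = true ∧ s.1 2 = true, {(O2, 1)}⟩
noncomputable def C3 : CProp :=
  ⟨fun s => s.2 true = true ∧ s.1 2 = true, {(O3, 1)}⟩

lemma cprops_eq : keysDomain.cprops = [C1, C2, C3] := rfl

/-- the world in which the keys are picked up -/
def W1 : PECWorld (Fin 3) Bool Bool 3 :=
  ![(![false, false, true], fun a => a),
    (![true, false, true], fun a => !a),
    (![true, false, false], fun _ => false),
    (![true, false, false], fun _ => false)]

/-- the world in which the keys are forgotten -/
def W2 : PECWorld (Fin 3) Bool Bool 3 :=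
  ![(![false, false, true], fun _ => false),
    (![false, false, true], fun a => !a),
    (![false, true, false], fun _ => false),
    (![false, true, false], fun _ => false)]

noncomputable def Tr1 : ((Fin 3 → Bool) × ℝ) × (Fin 4 → Option ((Fin 3 → Option Bool) × ℝ)) :=
  ((s0, 1), fun i => if i = 0 then some (O3, 1) else if i = 1 then some (O2, 1) else none)

noncomputable def Tr2 : ((Fin 3 → Bool) × ℝ) × (Fin 4 → Option ((Fin 3 → Option Bool) × ℝ)) :=
  ((s0, 1), fun i => if i = 1 then some (O1, 1) else none)

lemma mem_cprops {c : CProp} (h : c ∈ keysDomain.cprops) : c = C1 ∨ c = C2 ∨ c = C3 := by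
  rw [cprops_eq] at h
  simpa using h

lemma mem_pprops {a : Bool} {i : Fin 4} {p : ℝ} (h : (a, i, p) ∈ keysDomain.pprops) :
    (a = true ∧ i = 0 ∧ p = 0.99) ∨ (a = false ∧ i = 1 ∧ p = 1) := by
  have : (a, i, p) = (true, (0 : Fin 4), (0.99 : ℝ)) ∨ (a, i, p) = (false, (1 : Fin 4), (1 : ℝ)) := by
    simpa [keysDomain] using h
  rcases this with h | h <;> [left; right] <;>
    simpa [Prod.ext_iff] using h

lemma no_act {w : PECWorld (Fin 3) Bool Bool 3} {i : Fin 4}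
    (hf : (w i).2 false = false) (ht : (w i).2 true = false) :
    ¬ ∃ c, activated keysDomain w i c := by
  rintro ⟨c, hm, hb⟩
  rcases mem_cprops hm with rfl | rfl | rfl
  · rw [C1] at hb; rw [hb.1] at hf; exact Bool.noConfusion hf
  · rw [C2] at hb; rw [hb.1] at hf; exact Bool.noConfusion hf
  · rw [C3] at hb; rw [hb.1] at ht; exact Bool.noConfusion ht

lemma act_only_C1 {w : PECWorld (Fin 3) Bool Bool 3} {i : Fin 4}
    (hk : (w i).1 0 = false) (ht : (w i).2 true = false) :
    ∀ c, activated keysDomain w i c → c = C1 := by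
  rintro c ⟨hm, hb⟩
  rcases mem_cprops hm with rfl | rfl | rfl
  · rfl
  · rw [C2] at hb; rw [hb.2.1] at hk; exact Bool.noConfusion hk
  · rw [C3] at hb; rw [hb.1] at ht; exact Bool.noConfusion ht

lemma act_only_C2 {w : PECWorld (Fin 3) Bool Bool 3} {i : Fin 4}
    (hk : (w i).1 0 = true) (ht : (w i).2 true = false) :
    ∀ c, activated keysDomain w i c → c = C2 := by
  rintro c ⟨hm, hb⟩
  rcases mem_cprops hm with rfl | rfl | rfl
  · rw [C1] at hb; rw [hb.2.1] at hk; exact Bool.noConfusion hk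
  · rfl
  · rw [C3] at hb; rw [hb.1] at ht; exact Bool.noConfusion ht

lemma act_only_C3 {w : PECWorld (Fin 3) Bool Bool 3} {i : Fin 4}
    (hf : (w i).2 false = false) :
    ∀ c, activated keysDomain w i c → c = C3 := by
  rintro c ⟨hm, hb⟩
  rcases mem_cprops hm with rfl | rfl | rfl
  · rw [C1] at hb; rw [hb.1] at hf; exact Bool.noConfusion hf
  · rw [C2] at hb; rw [hb.1] at hf; exact Bool.noConfusion hf
  · rfl

end Stmt18Aux

namespace Stmt18Aux

lemma hgo_of_cwa {w : PECWorld (Fin 3) Bool Bool 3} (hc : cwa keysDomain w) :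
    ∀ i : Fin 4, i ≠ 1 → (w i).2 false = false := by
  intro i hi
  cases h : (w i).2 false with
  | false => rfl
  | true =>
    obtain ⟨p, hp⟩ := hc.1 false i h
    rcases mem_pprops hp with ⟨h', _⟩ | ⟨_, h', _⟩
    · exact Bool.noConfusion h'
    · exact (hi h').elim

lemma hpk_of_cwa {w : PECWorld (Fin 3) Bool Bool 3} (hc : cwa keysDomain w) :
    ∀ i : Fin 4, i ≠ 0 → (w i).2 true = false := by
  intro i hi
  cases h : (w i).2 true with
  | false => rfl
  | true =>
    obtain ⟨p, hp⟩ := hc.1 true i h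
    rcases mem_pprops hp with ⟨_, h', _⟩ | ⟨h', _⟩
    · exact (hi h').elim
    · exact Bool.noConfusion h'

lemma hgo1_of_cwa {w : PECWorld (Fin 3) Bool Bool 3} (hc : cwa keysDomain w) :
    (w 1).2 false = true :=
  hc.2 false 1 (by simp [keysDomain])

lemma main {w : PECWorld (Fin 3) Bool Bool 3}
    {tr : ((Fin 3 → Bool) × ℝ) × (Fin 4 → Option ((Fin 3 → Option Bool) × ℝ))}
    (hc : cwa keysDomain w) (htr : IsTrace keysDomain w tr) :
    (w = W1 ∧ tr = Tr1) ∨ (w = W2 ∧ tr = Tr2) := by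
  obtain ⟨ht1, ht2, ht3, ht4⟩ := htr
  have hgo := hgo_of_cwa hc
  have hpk := hpk_of_cwa hc
  have hgo1 := hgo1_of_cwa hc
  have htr1 : tr.1 = (s0, 1) := by
    have h : tr.1 ∈ ({((s0 : Fin 3 → Bool), (1 : ℝ))} : Finset _) := ht1
    exact Finset.mem_singleton.mp h
  have hw0 : (w 0).1 = s0 := by rw [ht2, htr1]
  -- justified change at the quiet instants 2 and 3
  have e2 : tr.2 2 = none := by
    have h32 := ht3 2
    cases h : tr.2 2 with
    | none => rfl
    | some O =>
      rw [h] at h32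
      obtain ⟨c, hca, -⟩ := h32
      exact (no_act (hgo 2 (by decide)) (hpk 2 (by decide)) ⟨c, hca⟩).elim
  have e3 : tr.2 3 = none := by
    have h33 := ht3 3
    cases h : tr.2 3 with
    | none => rfl
    | some O =>
      rw [h] at h33
      obtain ⟨c, hca, -⟩ := h33
      exact (no_act (hgo 3 (by decide)) (hpk 3 (by decide)) ⟨c, hca⟩).elim
  have h42 := ht4 2
  rw [show ((2 : Fin 3).succ = (3 : Fin 4)) from rfl,
      show ((2 : Fin 3).castSucc = (2 : Fin 4)) from rfl, e2] at h42
  cases hb : (w 0).2 true with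
  | true =>
    -- the keys are picked up
    left
    have a0 : activated keysDomain w 0 C3 :=
      ⟨by rw [cprops_eq]; simp, ⟨hb, by rw [hw0]; rfl⟩⟩
    have e0 : tr.2 0 = some (O3, 1) := by
      have h30 := ht3 0
      cases h : tr.2 0 with
      | none => rw [h] at h30; exact (h30 ⟨C3, a0⟩).elim
      | some O =>
        rw [h] at h30
        obtain ⟨c, hca, hO⟩ := h30
        rcases act_only_C3 (hgo 0 (by decide)) c hca with rfl
        have : O = (O3, 1) := Finset.mem_singleton.mp hO
        rw [this]
    have h40 := ht4 0
    rw [show ((0 : Fin 3).succ = (1 : Fin 4)) from rfl,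
        show ((0 : Fin 3).castSucc = (0 : Fin 4)) from rfl, e0] at h40
    have hs1 : (w 1).1 = ![true, false, true] := by
      rw [h40, hw0]; funext f; fin_cases f <;> rfl
    have a1 : activated keysDomain w 1 C2 :=
      ⟨by rw [cprops_eq]; simp, ⟨hgo1, by rw [hs1]; rfl, by rw [hs1]; rfl⟩⟩
    have e1 : tr.2 1 = some (O2, 1) := by
      have h31 := ht3 1
      cases h : tr.2 1 with
      | none => rw [h] at h31; exact (h31 ⟨C2, a1⟩).elim
      | some O =>
        rw [h] at h31
        obtain ⟨c, hca, hO⟩ := h31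
        rcases act_only_C2 (by rw [hs1]; rfl) (hpk 1 (by decide)) c hca with rfl
        have : O = (O2, 1) := Finset.mem_singleton.mp hO
        rw [this]
    have h41 := ht4 1
    rw [show ((1 : Fin 3).succ = (2 : Fin 4)) from rfl,
        show ((1 : Fin 3).castSucc = (1 : Fin 4)) from rfl, e1] at h41
    have hs2 : (w 2).1 = ![true, false, false] := by
      rw [h41, hs1]; funext f; fin_cases f <;> rfl
    have hs3 : (w 3).1 = ![true, false, false] := by rw [h42, hs2]; rfl
    constructor
    · funext i
      have haction : ∀ i : Fin 4, (w i).2 = (W1 i).2 := by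
        intro i
        funext a
        cases a with
        | true =>
          by_cases h : i = 0
          · subst h; rw [hb]; rfl
          · rw [hpk i h]
            fin_cases i <;> first | (exact absurd rfl h) | rfl
        | false =>
          by_cases h : i = 1
          · subst h; rw [hgo1]; rfl
          · rw [hgo i h]
            fin_cases i <;> first | (exact absurd rfl h) | rfl
      have hfl : ∀ i : Fin 4, (w i).1 = (W1 i).1 := by
        intro i
        fin_cases i
        · show (w 0).1 = _; rw [hw0]; funext f; fin_cases f <;> rfl
        · show (w 1).1 = _; rw [hs1]; rfl
        · show (w 2).1 = _; rw [hs2]; rfl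
        · show (w 3).1 = _; rw [hs3]; rfl
      exact Prod.ext (hfl i) (haction i)
    · refine Prod.ext htr1 ?_
      funext i
      fin_cases i
      · show tr.2 0 = _; rw [e0]; rfl
      · show tr.2 1 = _; rw [e1]; rfl
      · show tr.2 2 = _; rw [e2]; rfl
      · show tr.2 3 = _; rw [e3]; rfl
  | false =>
    -- the keys are forgotten
    right
    have e0 : tr.2 0 = none := by
      have h30 := ht3 0
      cases h : tr.2 0 with
      | none => rfl
      | some O =>
        rw [h] at h30
        obtain ⟨c, hca, -⟩ := h30
        exact (no_act (hgo 0 (by decide)) hb ⟨c, hca⟩).elim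
    have h40 := ht4 0
    rw [show ((0 : Fin 3).succ = (1 : Fin 4)) from rfl,
        show ((0 : Fin 3).castSucc = (0 : Fin 4)) from rfl, e0] at h40
    have hs1 : (w 1).1 = s0 := by rw [h40, hw0]; rfl
    have a1 : activated keysDomain w 1 C1 :=
      ⟨by rw [cprops_eq]; simp, ⟨hgo1, by rw [hs1]; rfl, by rw [hs1]; rfl⟩⟩
    have e1 : tr.2 1 = some (O1, 1) := by
      have h31 := ht3 1
      cases h : tr.2 1 with
      | none => rw [h] at h31; exact (h31 ⟨C1, a1⟩).elim
      | some O =>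
        rw [h] at h31
        obtain ⟨c, hca, hO⟩ := h31
        rcases act_only_C1 (by rw [hs1]; rfl) (hpk 1 (by decide)) c hca with rfl
        have : O = (O1, 1) := Finset.mem_singleton.mp hO
        rw [this]
    have h41 := ht4 1
    rw [show ((1 : Fin 3).succ = (2 : Fin 4)) from rfl,
        show ((1 : Fin 3).castSucc = (1 : Fin 4)) from rfl, e1] at h41
    have hs2 : (w 2).1 = ![false, true, false] := by
      rw [h41, hs1]; funext f; fin_cases f <;> rfl
    have hs3 : (w 3).1 = ![false, true, false] := by rw [h42, hs2]; rfl
    constructor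
    · funext i
      have haction : ∀ i : Fin 4, (w i).2 = (W2 i).2 := by
        intro i
        funext a
        cases a with
        | true =>
          by_cases h : i = 0
          · subst h; rw [hb]; rfl
          · rw [hpk i h]
            fin_cases i <;> first | (exact absurd rfl h) | rfl
        | false =>
          by_cases h : i = 1
          · subst h; rw [hgo1]; rfl
          · rw [hgo i h]
            fin_cases i <;> first | (exact absurd rfl h) | rfl
      have hfl : ∀ i : Fin 4, (w i).1 = (W2 i).1 := by
        intro i
        fin_cases i
        · show (w 0).1 = _; rw [hw0]; funext f; fin_cases f <;> rfl
        · show (w 1).1 = _; rw [hs1]; funext f; fin_cases f <;> rfl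
        · show (w 2).1 = _; rw [hs2]; rfl
        · show (w 3).1 = _; rw [hs3]; rfl
      exact Prod.ext (hfl i) (haction i)
    · refine Prod.ext htr1 ?_
      funext i
      fin_cases i
      · show tr.2 0 = _; rw [e0]; rfl
      · show tr.2 1 = _; rw [e1]; rfl
      · show tr.2 2 = _; rw [e2]; rfl
      · show tr.2 3 = _; rw [e3]; rfl

end Stmt18Aux

namespace Stmt18Aux

lemma W1_ne_W2 : W1 ≠ W2 := by
  intro h
  exact Bool.noConfusion (congrArg (fun v => (v 0).2 true) h)

lemma cwa_W1 : cwa keysDomain W1 := by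
  constructor
  · have m1 : (true, (0 : Fin 4), (0.99 : ℝ)) ∈ keysDomain.pprops :=
      Finset.mem_insert_self _ _
    have m2 : (false, (1 : Fin 4), (1 : ℝ)) ∈ keysDomain.pprops :=
      Finset.mem_insert_of_mem (Finset.mem_singleton_self _)
    intro a i h
    fin_cases i <;> cases a <;>
      first
        | exact absurd h (by decide)
        | exact ⟨0.99, m1⟩
        | exact ⟨1, m2⟩
  · intro a i hp
    rcases mem_pprops hp with ⟨-, -, h⟩ | ⟨rfl, rfl, -⟩
    · norm_num at h
    · rfl

lemma cwa_W2 : cwa keysDomain W2 := by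
  constructor
  · have m1 : (true, (0 : Fin 4), (0.99 : ℝ)) ∈ keysDomain.pprops :=
      Finset.mem_insert_self _ _
    have m2 : (false, (1 : Fin 4), (1 : ℝ)) ∈ keysDomain.pprops :=
      Finset.mem_insert_of_mem (Finset.mem_singleton_self _)
    intro a i h
    fin_cases i <;> cases a <;>
      first
        | exact absurd h (by decide)
        | exact ⟨0.99, m1⟩
        | exact ⟨1, m2⟩
  · intro a i hp
    rcases mem_pprops hp with ⟨-, -, h⟩ | ⟨rfl, rfl, -⟩
    · norm_num at h
    · rfl

lemma trace_W1 : IsTrace keysDomain W1 Tr1 := by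
  refine ⟨Finset.mem_singleton.mpr rfl, by funext f; fin_cases f <;> rfl, ?_, ?_⟩
  · intro i
    fin_cases i
    · exact ⟨C3, ⟨by rw [cprops_eq]; simp, ⟨rfl, rfl⟩⟩, Finset.mem_singleton.mpr rfl⟩
    · exact ⟨C2, ⟨by rw [cprops_eq]; simp, ⟨rfl, rfl, rfl⟩⟩, Finset.mem_singleton.mpr rfl⟩
    · exact no_act rfl rfl
    · exact no_act rfl rfl
  · intro i
    fin_cases i <;> (funext f; fin_cases f <;> rfl)

lemma trace_W2 : IsTrace keysDomain W2 Tr2 := by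
  refine ⟨Finset.mem_singleton.mpr rfl, by funext f; fin_cases f <;> rfl, ?_, ?_⟩
  · intro i
    fin_cases i
    · exact no_act rfl rfl
    · exact ⟨C1, ⟨by rw [cprops_eq]; simp, ⟨rfl, rfl, rfl⟩⟩, Finset.mem_singleton.mpr rfl⟩
    · exact no_act rfl rfl
    · exact no_act rfl rfl
  · intro i
    fin_cases i <;> (funext f; fin_cases f <;> rfl)

lemma wb_W1 : wellBehaved keysDomain W1 := ⟨cwa_W1, Tr1, trace_W1⟩
lemma wb_W2 : wellBehaved keysDomain W2 := ⟨cwa_W2, Tr2, trace_W2⟩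

lemma traceSet_W1 : {tr | IsTrace keysDomain W1 tr} = {Tr1} := by
  ext tr
  simp only [Set.mem_setOf_eq, Set.mem_singleton_iff]
  constructor
  · intro h
    rcases main cwa_W1 h with ⟨-, h'⟩ | ⟨hW, -⟩
    · exact h'
    · exact absurd hW W1_ne_W2
  · rintro rfl; exact trace_W1

lemma traceSet_W2 : {tr | IsTrace keysDomain W2 tr} = {Tr2} := by
  ext tr
  simp only [Set.mem_setOf_eq, Set.mem_singleton_iff]
  constructor
  · intro h
    rcases main cwa_W2 h with ⟨hW, -⟩ | ⟨-, h'⟩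
    · exact absurd hW.symm W1_ne_W2
    · exact h'
  · rintro rfl; exact trace_W2

lemma epsTrace_Tr1 : epsTrace Tr1 = 1 := by
  rw [epsTrace, Fin.prod_univ_four]
  norm_num [Tr1, show (2 : Fin 4) ≠ 0 by decide, show (2 : Fin 4) ≠ 1 by decide,
    show (3 : Fin 4) ≠ 0 by decide, show (3 : Fin 4) ≠ 1 by decide]

lemma epsTrace_Tr2 : epsTrace Tr2 = 1 := by
  rw [epsTrace, Fin.prod_univ_four]
  norm_num [Tr2, show (2 : Fin 4) ≠ 1 by decide, show (3 : Fin 4) ≠ 1 by decide]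

lemma pprops_pair :
    keysDomain.pprops = {(true, (0 : Fin 4), (0.99 : ℝ)), (false, (1 : Fin 4), (1 : ℝ))} := rfl

lemma epsD_W1 : epsD keysDomain W1 = 0.99 := by
  rw [epsD, pprops_pair, Finset.prod_pair (by simp)]
  rw [if_pos (show (W1 0).2 true = true from rfl), if_pos (show (W1 1).2 false = true from rfl)]
  norm_num

lemma epsD_W2 : epsD keysDomain W2 = 0.01 := by
  rw [epsD, pprops_pair, Finset.prod_pair (by simp)]
  rw [if_neg (show ¬ ((W2 0).2 true = true) by decide),
      if_pos (show (W2 1).2 false = true from rfl)]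
  norm_num

lemma model_W1 : modelOf keysDomain W1 = 0.99 := by
  rw [modelOf, if_pos wb_W1, traceSet_W1, finsum_mem_singleton, epsTrace_Tr1, epsD_W1, mul_one]

lemma model_W2 : modelOf keysDomain W2 = 0.01 := by
  rw [modelOf, if_pos wb_W2, traceSet_W2, finsum_mem_singleton, epsTrace_Tr2, epsD_W2, mul_one]

lemma uniq {w : PECWorld (Fin 3) Bool Bool 3} (h : wellBehaved keysDomain w) :
    w = W1 ∨ w = W2 := by
  obtain ⟨hc, tr, htr⟩ := h
  rcases main hc htr with ⟨h', -⟩ | ⟨h', -⟩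
  · exact Or.inl h'
  · exact Or.inr h'

lemma model_other {w : PECWorld (Fin 3) Bool Bool 3} (h1 : w ≠ W1) (h2 : w ≠ W2) :
    modelOf keysDomain w = 0 := by
  rw [modelOf, if_neg]
  intro hw
  rcases uniq hw with h | h
  exacts [h1 h, h2 h]

end Stmt18Aux

/-- There are exactly two well-behaved worlds of the Keys domain, with model values
0.99 (keys picked up) and 0.01 (keys forgotten); LockedOut holds with probability
0.01 at any instant after 7:40 and HasKeys with probability 0.99 at any instant
after 7:30. -/
theorem stmt18 :
    ∃ w1 w2 : PECWorld (Fin 3) Bool Bool 3,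
      w1 ≠ w2 ∧ wellBehaved keysDomain w1 ∧ wellBehaved keysDomain w2 ∧
      (∀ w, wellBehaved keysDomain w → w = w1 ∨ w = w2) ∧
      modelOf keysDomain w1 = 0.99 ∧ modelOf keysDomain w2 = 0.01 ∧
      (∀ i : Fin 4, 1 < i →
        (∑ w : PECWorld (Fin 3) Bool Bool 3,
          if (w i).1 1 = true then modelOf keysDomain w else 0) = 0.01) ∧
      (∀ i : Fin 4, 0 < i →
        (∑ w : PECWorld (Fin 3) Bool Bool 3,
          if (w i).1 0 = true then modelOf keysDomain w else 0) = 0.99) := by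
  classical
  refine ⟨Stmt18Aux.W1, Stmt18Aux.W2, Stmt18Aux.W1_ne_W2, Stmt18Aux.wb_W1, Stmt18Aux.wb_W2,
    fun w h => Stmt18Aux.uniq h, Stmt18Aux.model_W1, Stmt18Aux.model_W2, ?_, ?_⟩
  · intro i hi
    rw [Finset.sum_eq_add_of_mem Stmt18Aux.W1 Stmt18Aux.W2 (Finset.mem_univ _)
      (Finset.mem_univ _) Stmt18Aux.W1_ne_W2
      (fun c _ hc => by rw [Stmt18Aux.model_other hc.1 hc.2, ite_self])]
    fin_cases i
    · exact absurd hi (by decide)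
    · exact absurd hi (by decide)
    · rw [if_neg (by decide), if_pos (by decide), Stmt18Aux.model_W2, zero_add]
    · rw [if_neg (by decide), if_pos (by decide), Stmt18Aux.model_W2, zero_add]
  · intro i hi
    rw [Finset.sum_eq_add_of_mem Stmt18Aux.W1 Stmt18Aux.W2 (Finset.mem_univ _)
      (Finset.mem_univ _) Stmt18Aux.W1_ne_W2
      (fun c _ hc => by rw [Stmt18Aux.model_other hc.1 hc.2, ite_self])]
    fin_cases i
    · exact absurd hi (by decide)
    · rw [if_pos (by decide), if_neg (by decide), Stmt18Aux.model_W1, add_zero]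
    · rw [if_pos (by decide), if_neg (by decide), Stmt18Aux.model_W1, add_zero]
    · rw [if_pos (by decide), if_neg (by decide), Stmt18Aux.model_W1, add_zero]
end
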